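/- Let M ∈ GL(2, ℂ) and let C be the FSCc matrix of a cycle whose point set in ℂ is nonempty. If a point z lies on the cycle C and γz + δ ≠ 0 (where M = [[α,β],[γ,δ]]), then the image point (αz+β)/(γz+δ) lies on the cycle with FSCc matrix conj(M)·C·M⁻¹. -/

import Mathlib

open Matrix Complex

noncomputable def fscc (k l n m : ℝ) : Matrix (Fin 2) (Fin 2) ℂ :=
  !![(starRingEnd ℂ) (l + n * I), -(m : ℂ); (k : ℂ), -(l + n * I)]

noncomputable def mconj (A : Matrix (Fin 2) (Fin 2) ℂ) : Matrix (Fin 2) (Fin 2) ℂ :=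
  A.map (starRingEnd ℂ)

def onCycle (C : Matrix (Fin 2) (Fin 2) ℂ) (z : ℂ) : Prop :=
  Matrix.vecMul ![(-1 : ℂ), (starRingEnd ℂ) z] C ⬝ᵥ ![z, 1] = 0

theorem flt_maps_cycle_to_cycle (M : Matrix (Fin 2) (Fin 2) ℂ) (hM : IsUnit M.det)
    (k l n m : ℝ) (z : ℂ)
    (hz : onCycle (fscc k l n m) z)
    (hd : M 1 0 * z + M 1 1 ≠ 0) :
    onCycle (mconj M * fscc k l n m * M⁻¹)
      ((M 0 0 * z + M 0 1) / (M 1 0 * z + M 1 1)) := by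
  have hdet : M.det ≠ 0 := by simpa using hM.ne_zero
  have hcd : (starRingEnd ℂ) z * (starRingEnd ℂ) (M 1 0) + (starRingEnd ℂ) (M 1 1) ≠ 0 := by
    rw [mul_comm, ← _root_.map_mul, ← map_add]
    exact fun h => hd (by simpa using congrArg (starRingEnd ℂ) h)
  have h1 : M.mulVec ![z, 1]
      = (M 1 0 * z + M 1 1) • ![(M 0 0 * z + M 0 1) / (M 1 0 * z + M 1 1), 1] := by
    have hd' : z * M 1 0 + M 1 1 ≠ 0 := by rwa [mul_comm]
    funext i
    fin_cases i <;>
      · simp only [Matrix.mulVec, dotProduct, Fin.sum_univ_two, Matrix.cons_val_zero,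
          Matrix.cons_val_one, Matrix.head_cons, Pi.smul_apply, smul_eq_mul, Fin.zero_eta, Fin.mk_one]
        field_simp
  have h1' : M⁻¹.mulVec ![(M 0 0 * z + M 0 1) / (M 1 0 * z + M 1 1), 1]
      = (M 1 0 * z + M 1 1)⁻¹ • ![z, 1] := by
    have h : ![(M 0 0 * z + M 0 1) / (M 1 0 * z + M 1 1), (1 : ℂ)]
        = (M 1 0 * z + M 1 1)⁻¹ • M.mulVec ![z, 1] := by
      rw [h1, smul_smul, inv_mul_cancel₀ hd, one_smul]
    rw [h, Matrix.mulVec_smul, Matrix.mulVec_mulVec, Matrix.nonsing_inv_mul M hM,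
      Matrix.one_mulVec]
  have h2 : Matrix.vecMul ![(-1 : ℂ),
        (starRingEnd ℂ) ((M 0 0 * z + M 0 1) / (M 1 0 * z + M 1 1))] (mconj M)
      = (starRingEnd ℂ) (M.det / (M 1 0 * z + M 1 1)) • ![(-1 : ℂ), (starRingEnd ℂ) z] := by
    have ht := mul_inv_cancel₀ hcd
    funext i
    fin_cases i <;>
      simp only [mconj, Matrix.vecMul, dotProduct, Fin.sum_univ_two, Matrix.map_apply,
        Matrix.cons_val_zero, Matrix.cons_val_one, Matrix.head_cons, Pi.smul_apply,
        smul_eq_mul, Matrix.det_fin_two, map_div₀, map_add, map_sub, _root_.map_mul, Fin.zero_eta, Fin.mk_one] <;>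
      field_simp
    · ring
    · ring
  unfold onCycle
  rw [Matrix.mul_assoc, ← Matrix.vecMul_vecMul, h2, ← Matrix.dotProduct_mulVec,
    ← Matrix.mulVec_mulVec, h1', smul_dotProduct, Matrix.mulVec_smul,
    dotProduct_smul, Matrix.dotProduct_mulVec, hz, smul_zero, smul_zero]
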